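/- For the A_{n−1}^(1) case with B = B^{1,l}⊗B^{1,m} (l ≥ m), if p is a highest weight path in P(p^{(λ,μ)}, B) with p(j) = (a_i^{(j)})⊗(b_i^{(j)}), then for all i,j: a_{i−1}^{(j)} ≥ b_i^{(j)} and a_{i−1}^{(j)} + b_{i−1}^{(j)} − b_i^{(j)} = a_i^{(j−1)}, i.e., φ_i(p(j)) = ε_i(p(j−1)). -/

import Mathlib

/-- Iterated application of a partial (crystal) operator. -/
def iterOpt {B : Type*} (g : B → Option B) : ℕ → B → Option B
  | 0, b => some b
  | n + 1, b => (g b).bind (iterOpt g n)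

/-- Tensor product rule for `ẽ`: acts on the left factor iff `φ(b1) ≥ ε(b2)`. -/
def tensE {B1 B2 : Type*} (e1 : B1 → Option B1) (e2 : B2 → Option B2)
    (φ1 : B1 → ℕ) (ε2 : B2 → ℕ) (p : B1 × B2) : Option (B1 × B2) :=
  if ε2 p.2 ≤ φ1 p.1 then (e1 p.1).map (fun b => (b, p.2))
  else (e2 p.2).map (fun b => (p.1, b))

/-- Tensor product rule for `f̃`: acts on the left factor iff `φ(b1) > ε(b2)`. -/
def tensF {B1 B2 : Type*} (f1 : B1 → Option B1) (f2 : B2 → Option B2)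
    (φ1 : B1 → ℕ) (ε2 : B2 → ℕ) (p : B1 × B2) : Option (B1 × B2) :=
  if ε2 p.2 < φ1 p.1 then (f1 p.1).map (fun b => (b, p.2))
  else (f2 p.2).map (fun b => (p.1, b))


/-- The operator `ẽ_r` on the `A_{n−1}^{(1)}` crystal `B^{1,l}`. -/
def erA (n : ℕ) [NeZero n] (r : Fin n) (b : Fin n → ℕ) : Option (Fin n → ℕ) :=
  if b r = 0 then none
  else some (fun i => if i = r then b i - 1 else if i = r - 1 then b i + 1 else b i)

open Fin.NatCast in
/-- The reference path `p^{(λ,μ)}(j) = (λ_{i+j} + μ_{i+2j}) ⊗ (μ_{i+2j−1})`. -/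
def prefA (n : ℕ) [NeZero n] (lam mu : Fin n → ℕ) (j : ℕ) :
    (Fin n → ℕ) × (Fin n → ℕ) :=
  (fun i => lam (i + (j : Fin n)) + mu (i + ((2 * j : ℕ) : Fin n)),
   fun i => mu (i + ((2 * j : ℕ) : Fin n) - 1))

/-- `ε_r` of the tail of a path, via the tensor product rule. -/
def epsTail {B : Type*} (ε φ : B → ℕ) (p : ℕ → B) : ℕ → ℕ
  | 0 => 0
  | k + 1 => max (ε (p k)) (ε (p k) + epsTail ε φ p k - φ (p k))

/-- One application of `ẽ` to a semi-infinite path (`p j` is the `(j+1)`-st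
factor from the right); `ẽ p = 0` iff no `q` with `EStep … p q` exists. -/
def EStep {B : Type*} (e : B → Option B) (ε φ : B → ℕ) (p q : ℕ → B) : Prop :=
  ∃ j, epsTail ε φ p j ≤ φ (p j) ∧ (∀ k, j < k → φ (p k) < epsTail ε φ p k) ∧
    e (p j) = some (q j) ∧ ∀ k, k ≠ j → q k = p k

theorem epsTail_succ' {B : Type*} (ε φ : B → ℕ) (p : ℕ → B) (k : ℕ) :
    epsTail ε φ p (k+1) = ε (p k) + (epsTail ε φ p k - φ (p k)) := by
  show max _ _ = _
  omega

theorem key_lemma {B : Type*} (ε φ : B → ℕ) (p : ℕ → B) (j : ℕ)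
    (hphi : ∀ k, j + 1 ≤ k → φ (p (k+1)) = ε (p k))
    (hw : ∀ j₀, epsTail ε φ p j₀ ≤ φ (p j₀) →
      (∀ k, j₀ < k → φ (p k) < epsTail ε φ p k) → ε (p j₀) = 0) :
    ε (p j) ≤ φ (p (j+1)) := by
  classical
  have Dall : ∀ k, j + 1 ≤ k →
      epsTail ε φ p k - φ (p k) = epsTail ε φ p (j+1) - φ (p (j+1)) := by
    intro k hk
    induction k, hk using Nat.le_induction with
    | base => rfl
    | succ k hk ih =>
      rw [epsTail_succ', hphi k hk, ← ih]
      omega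
  by_cases hc : epsTail ε φ p (j+1) ≤ φ (p (j+1))
  · calc ε (p j) ≤ epsTail ε φ p (j+1) := by rw [epsTail_succ']; omega
    _ ≤ _ := hc
  · exfalso
    have hpos : ∀ k, j + 1 ≤ k → φ (p k) < epsTail ε φ p k := by
      intro k hk
      have := Dall k hk
      omega
    set Q : ℕ → Prop := fun k => epsTail ε φ p k ≤ φ (p k) with hQ
    set j₀ := Nat.findGreatest Q j with hj₀def
    have hQ0 : Q 0 := by
      show epsTail ε φ p 0 ≤ _
      show (0:ℕ) ≤ _
      exact Nat.zero_le _
    have hj₀ : Q j₀ := Nat.findGreatest_spec (Nat.zero_le j) hQ0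
    have hgt : ∀ k, j₀ < k → φ (p k) < epsTail ε φ p k := by
      intro k hk
      by_cases hkj : k ≤ j
      · have := Nat.findGreatest_is_greatest hk hkj
        simp only [hQ] at this
        omega
      · exact hpos k (by omega)
    have hz := hw j₀ hj₀ hgt
    have h0 : epsTail ε φ p (j₀+1) = 0 := by
      rw [epsTail_succ', hz]
      have := hj₀
      simp only [hQ] at this
      omega
    have := hgt (j₀+1) (Nat.lt_succ_self _)
    omega

theorem hw_extract (n : ℕ) [NeZero n] (r : Fin n) (p : ℕ → (Fin n → ℕ) × (Fin n → ℕ))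
    (hhw : ¬ ∃ q,
      EStep (tensE (erA n r) (erA n r) (fun x => x (r - 1)) (fun y => y r))
        (fun b => max (b.1 r) (b.1 r + b.2 r - b.1 (r - 1)))
        (fun b => max (b.2 (r - 1)) (b.1 (r - 1) + b.2 (r - 1) - b.2 r))
        p q)
    (j₀ : ℕ)
    (h1 : epsTail (fun b => max (b.1 r) (b.1 r + b.2 r - b.1 (r - 1)))
        (fun b => max (b.2 (r - 1)) (b.1 (r - 1) + b.2 (r - 1) - b.2 r)) p j₀
        ≤ max ((p j₀).2 (r - 1)) ((p j₀).1 (r - 1) + (p j₀).2 (r - 1) - (p j₀).2 r))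
    (h2 : ∀ k, j₀ < k →
      max ((p k).2 (r - 1)) ((p k).1 (r - 1) + (p k).2 (r - 1) - (p k).2 r) <
      epsTail (fun b => max (b.1 r) (b.1 r + b.2 r - b.1 (r - 1)))
        (fun b => max (b.2 (r - 1)) (b.1 (r - 1) + b.2 (r - 1) - b.2 r)) p k) :
    (p j₀).1 r = 0 ∧ (p j₀).2 r ≤ (p j₀).1 (r - 1) := by
  by_contra hcon
  apply hhw
  have hsome : (tensE (erA n r) (erA n r) (fun x => x (r - 1)) (fun y => y r) (p j₀)).isSome := by
    by_cases hc : (p j₀).2 r ≤ (p j₀).1 (r - 1)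
    · have hz : ¬ (p j₀).1 r = 0 := by tauto
      simp [tensE, erA, hc, hz]
    · have hz : ¬ (p j₀).2 r = 0 := by omega
      simp [tensE, erA, hc, hz]
  obtain ⟨x, hx⟩ := Option.isSome_iff_exists.mp hsome
  exact ⟨Function.update p j₀ x, j₀, h1, h2, by simp [hx],
    fun k hk => Function.update_of_ne hk _ _⟩

open Fin.NatCast Fin.CommRing in
theorem base_case (n : ℕ) [NeZero n] (lam mu : Fin n → ℕ)
    (p : ℕ → (Fin n → ℕ) × (Fin n → ℕ)) (N : ℕ)
    (hN : ∀ k, N ≤ k → p k = prefA n lam mu k) (j : ℕ) (hj : N ≤ j) (i : Fin n) :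
    (p j).2 i ≤ (p j).1 (i - 1) ∧
    (p (j+1)).1 (i-1) + (p (j+1)).2 (i-1) - (p (j+1)).2 i = (p j).1 i := by
  rw [hN j hj, hN (j+1) (by omega)]
  simp only [prefA]
  constructor
  · have e0 : i - 1 + ((2*j : ℕ) : Fin n) = i + ((2*j:ℕ):Fin n) - 1 := by ring
    rw [e0]
    exact Nat.le_add_left _ _
  · have c2 : ((2*(j+1) : ℕ) : Fin n) = ((2*j:ℕ):Fin n) + 2 := by push_cast; ring
    have c1 : (((j+1) : ℕ) : Fin n) = ((j:ℕ):Fin n) + 1 := by push_cast; ring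
    rw [c1, c2]
    have e3 : i - 1 + (((2*j:ℕ):Fin n) + 2) = i + (((2*j:ℕ):Fin n)+2) - 1 := by ring
    have e4 : i - 1 + (((j:ℕ):Fin n) + 1) = i + ((j:ℕ):Fin n) := by ring
    have e5 : i + (((2*j:ℕ):Fin n) + 2) - 1 - 1 = i + ((2*j:ℕ):Fin n) := by ring
    rw [e3, e4, e5]
    omega

/-- in the `A_{n−1}^{(1)}` case `B = B^{1,l}⊗B^{1,m}` (`l ≥ m`),
if `p` is a highest weight path in `𝒫(p^{(λ,μ)}, B)` with
`p(j) = (a^{(j)}_i)⊗(b^{(j)}_i)`, then for all `i, j`: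
`a^{(j)}_{i−1} ≥ b^{(j)}_i` and
`a^{(j)}_{i−1} + b^{(j)}_{i−1} − b^{(j)}_i = a^{(j−1)}_i`
(i.e. `φ_i(p(j)) = ε_i(p(j−1))`). -/
theorem stmt19 (n l m : ℕ) [NeZero n] (hn : 2 ≤ n) (hlm : m ≤ l)
    (lam mu : Fin n → ℕ)
    (hlam : (∑ i, lam i) = l - m) (hmu : (∑ i, mu i) = m)
    (p : ℕ → (Fin n → ℕ) × (Fin n → ℕ))
    -- p(j) ∈ B^{1,l}⊗B^{1,m}
    (hmem : ∀ j, (∑ i, (p j).1 i) = l ∧ (∑ i, (p j).2 i) = m)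
    -- p ∈ 𝒫(p^{(λ,μ)}, B)
    (hev : ∃ N, ∀ k, N ≤ k → p k = prefA n lam mu k)
    -- p is a highest weight element: ẽ_r p = 0 for all r
    (hhw : ∀ r : Fin n, ¬ ∃ q,
      EStep (tensE (erA n r) (erA n r) (fun x => x (r - 1)) (fun y => y r))
        (fun b => max (b.1 r) (b.1 r + b.2 r - b.1 (r - 1)))
        (fun b => max (b.2 (r - 1)) (b.1 (r - 1) + b.2 (r - 1) - b.2 r))
        p q) :
    ∀ (j : ℕ) (i : Fin n),
      ((p j).2 i ≤ (p j).1 (i - 1)) ∧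
      (1 ≤ j → (p j).1 (i - 1) + (p j).2 (i - 1) - (p j).2 i
        = (p (j - 1)).1 i) := by
  classical
  obtain ⟨N, hN⟩ := hev
  have step : ∀ j : ℕ,
      (∀ k, j < k → ∀ i : Fin n, (p k).2 i ≤ (p k).1 (i-1) ∧
        (p (k+1)).1 (i-1) + (p (k+1)).2 (i-1) - (p (k+1)).2 i = (p k).1 i) →
      ∀ i : Fin n, (p j).2 i ≤ (p j).1 (i-1) ∧
        (p (j+1)).1 (i-1) + (p (j+1)).2 (i-1) - (p (j+1)).2 i = (p j).1 i := by
    intro j IH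
    have part1 : ∀ k, j < k → ∀ i : Fin n, (p k).2 i ≤ (p k).1 (i-1) :=
      fun k hk i => (IH k hk i).1
    have part2 : ∀ k, j < k → ∀ i : Fin n,
        (p (k+1)).1 (i-1) + (p (k+1)).2 (i-1) - (p (k+1)).2 i = (p k).1 i :=
      fun k hk i => (IH k hk i).2
    have key : ∀ r : Fin n,
        max ((p j).1 r) ((p j).1 r + (p j).2 r - (p j).1 (r-1)) ≤
        max ((p (j+1)).2 (r-1)) ((p (j+1)).1 (r-1) + (p (j+1)).2 (r-1) - (p (j+1)).2 r) := by
      intro r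
      refine key_lemma (fun b => max (b.1 r) (b.1 r + b.2 r - b.1 (r-1)))
        (fun b => max (b.2 (r-1)) (b.1 (r-1) + b.2 (r-1) - b.2 r)) p j ?_ ?_
      · intro k hk
        have h1 := part1 (k+1) (by omega) r
        have h2 := part2 k (by omega) r
        have h3 := part1 k (by omega) r
        show max _ _ = max _ _
        omega
      · intro j₀ h1 h2
        have h := hw_extract n r p (hhw r) j₀ h1 h2
        show max _ _ = 0
        omega
    have p1j1 : ∀ i : Fin n, (p (j+1)).2 i ≤ (p (j+1)).1 (i-1) := part1 (j+1) (by omega)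
    have hsA : ∑ i, (p (j+1)).1 i = l := (hmem (j+1)).1
    have hsB : ∑ i, (p (j+1)).2 i = m := (hmem (j+1)).2
    have hsa : ∑ i, (p j).1 i = l := (hmem j).1
    have hsum_shift1 : ∑ i : Fin n, (p (j+1)).1 (i-1) = l := by
      rw [← hsA]; exact Fintype.sum_equiv (Equiv.subRight (1:Fin n)) _ _ (fun i => rfl)
    have hsum_shift2 : ∑ i : Fin n, (p (j+1)).2 (i-1) = m := by
      rw [← hsB]; exact Fintype.sum_equiv (Equiv.subRight (1:Fin n)) _ _ (fun i => rfl)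
    have hsumφ : ∑ r : Fin n,
        ((p (j+1)).1 (r-1) + (p (j+1)).2 (r-1) - (p (j+1)).2 r) = l := by
      have h1 : (∑ r : Fin n, ((p (j+1)).1 (r-1) + (p (j+1)).2 (r-1) - (p (j+1)).2 r))
          + ∑ r : Fin n, (p (j+1)).2 r
          = ∑ r : Fin n, ((p (j+1)).1 (r-1) + (p (j+1)).2 (r-1)) := by
        rw [← Finset.sum_add_distrib]
        apply Finset.sum_congr rfl
        intro r _
        have := p1j1 r
        omega
      rw [Finset.sum_add_distrib, hsum_shift1, hsum_shift2, hsB] at h1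
      omega
    have keyr : ∀ r : Fin n,
        max ((p j).1 r) ((p j).1 r + (p j).2 r - (p j).1 (r-1)) ≤
        (p (j+1)).1 (r-1) + (p (j+1)).2 (r-1) - (p (j+1)).2 r := by
      intro r
      have h1 := key r
      have h2 := p1j1 r
      omega
    have hle1 : ∀ r ∈ Finset.univ,
        (p j).1 r ≤ max ((p j).1 r) ((p j).1 r + (p j).2 r - (p j).1 (r-1)) :=
      fun r _ => le_max_left _ _
    have hsum_max : ∑ r : Fin n,
        max ((p j).1 r) ((p j).1 r + (p j).2 r - (p j).1 (r-1)) = l := by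
      have u1 : ∑ r : Fin n, max ((p j).1 r) ((p j).1 r + (p j).2 r - (p j).1 (r-1)) ≤ l := by
        rw [← hsumφ]; exact Finset.sum_le_sum (fun r _ => keyr r)
      have u2 : l ≤ ∑ r : Fin n, max ((p j).1 r) ((p j).1 r + (p j).2 r - (p j).1 (r-1)) := by
        rw [← hsa]; exact Finset.sum_le_sum hle1
      omega
    have heps : ∀ r : Fin n,
        max ((p j).1 r) ((p j).1 r + (p j).2 r - (p j).1 (r-1)) = (p j).1 r := fun r =>
      ((Finset.sum_eq_sum_iff_of_le hle1).mp (by rw [hsa, hsum_max]) r (Finset.mem_univ r)).symm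
    have hle2 : ∀ r ∈ Finset.univ,
        (p j).1 r ≤ (p (j+1)).1 (r-1) + (p (j+1)).2 (r-1) - (p (j+1)).2 r := by
      intro r _
      have := keyr r
      omega
    have hφeq : ∀ r : Fin n,
        (p (j+1)).1 (r-1) + (p (j+1)).2 (r-1) - (p (j+1)).2 r = (p j).1 r := fun r =>
      ((Finset.sum_eq_sum_iff_of_le hle2).mp (by rw [hsa, hsumφ]) r (Finset.mem_univ r)).symm
    intro i
    refine ⟨?_, hφeq i⟩
    have := heps i
    omega
  have allP : ∀ j : ℕ, ∀ i : Fin n, (p j).2 i ≤ (p j).1 (i-1) ∧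
      (p (j+1)).1 (i-1) + (p (j+1)).2 (i-1) - (p (j+1)).2 i = (p j).1 i := by
    have main : ∀ d j : ℕ, N - d ≤ j → ∀ i : Fin n, (p j).2 i ≤ (p j).1 (i-1) ∧
        (p (j+1)).1 (i-1) + (p (j+1)).2 (i-1) - (p (j+1)).2 i = (p j).1 i := by
      intro d
      induction d with
      | zero => exact fun j hj => base_case n lam mu p N hN j (by omega)
      | succ d ih =>
        intro j hj
        by_cases h : N - d ≤ j
        · exact ih j h
        · exact step j (fun k hk => ih k (by omega))
    intro j
    exact main N j (by omega)
  intro j i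
  refine ⟨(allP j i).1, fun hj => ?_⟩
  have h2 := (allP (j-1) i).2
  rw [show j - 1 + 1 = j from by omega] at h2
  exact h2
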